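/- Let σ > 0, μ ≥ 0, and let a, b be real numbers with |a − b| ≤ σ·μ. Let Φ(t) denote the cumulative distribution function of the standard Gaussian measure on ℝ. Then for every Borel set S ⊆ ℝ and every real t: if the Gaussian measure with mean a and variance σ² assigns S probability at most Φ(t), then the Gaussian measure with mean b and variance σ² assigns S probability at most Φ(t + μ). (Equivalently, Φ⁻¹(P(N(b,σ²) ∈ S)) ≤ Φ⁻¹(P(N(a,σ²) ∈ S)) + μ, which is the μ-Gaussian-DP guarantee of adding N(0, σ²) noise to a statistic whose value changes by at most σμ between neighboring datasets.) -/

import Mathlib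

open ProbabilityTheory MeasureTheory Real

/-- The standard normal cumulative distribution function `Φ`. -/
noncomputable def stdGaussianCDF (t : ℝ) : ℝ :=
  ((gaussianReal 0 1) (Set.Iic t)).toReal

lemma stdGaussianCDF_nonneg (t : ℝ) : 0 ≤ stdGaussianCDF t := ENNReal.toReal_nonneg

lemma stdGaussianCDF_mono {s t : ℝ} (h : s ≤ t) : stdGaussianCDF s ≤ stdGaussianCDF t :=
  ENNReal.toReal_mono (measure_ne_top _ _) (measure_mono (Set.Iic_subset_Iic.mpr h))

lemma gaussianReal_neg_inv :
    (gaussianReal 0 1).map (fun x : ℝ => (-1 : ℝ) * x) = gaussianReal 0 1 := by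
  have h1 : (-1 : ℝ) * 0 = 0 := by norm_num
  have h2 : (⟨(-1 : ℝ) ^ 2, sq_nonneg _⟩ : NNReal) * 1 = 1 := by
    refine Subtype.ext ?_
    show ((-1 : ℝ) ^ 2 * 1 : ℝ) = 1
    norm_num
  rw [gaussianReal_map_const_mul, h1]
  congr 1

lemma gaussian_halfline (σ : ℝ) (hσ : 0 < σ) {s : ℝ} (hs : s = 1 ∨ s = -1) (m t : ℝ) :
    (gaussianReal m ⟨σ ^ 2, sq_nonneg σ⟩) {x | -(σ * t) ≤ s * (x - m)}
      = ENNReal.ofReal (stdGaussianCDF t) := by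
  have hss : s * s = 1 := by rcases hs with h | h <;> simp [h]
  have hmeasSet : MeasurableSet {x : ℝ | -(σ * t) ≤ s * (x - m)} :=
    measurableSet_le measurable_const (by fun_prop)
  have h1 : (σ * s) * (0 : ℝ) + m = m := by ring
  have h2 : (⟨(σ * s) ^ 2, sq_nonneg _⟩ : NNReal) * 1 = ⟨σ ^ 2, sq_nonneg σ⟩ := by
    refine Subtype.ext ?_
    show ((σ * s) ^ 2 * 1 : ℝ) = σ ^ 2
    have : (σ * s) ^ 2 = σ ^ 2 * (s * s) := by ring
    rw [this, hss]; ring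
  have hmap : (gaussianReal 0 1).map (fun x : ℝ => (σ * s) * x + m)
      = gaussianReal m ⟨σ ^ 2, sq_nonneg σ⟩ := by
    have hc : (fun x : ℝ => (σ * s) * x + m) = (· + m) ∘ (fun x : ℝ => (σ * s) * x) := rfl
    rw [hc, ← Measure.map_map (by fun_prop) (by fun_prop), gaussianReal_map_const_mul,
      gaussianReal_map_add_const, h1]
    congr 1
  have hpre : (fun x : ℝ => (σ * s) * x + m) ⁻¹' {x | -(σ * t) ≤ s * (x - m)}
      = Set.Ici (-t) := by
    ext x
    simp only [Set.mem_preimage, Set.mem_setOf_eq, Set.mem_Ici]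
    have hx : s * ((σ * s) * x + m - m) = σ * (s * s) * x := by ring
    rw [hx, hss, mul_one]
    constructor <;> intro hle <;> nlinarith
  have hsym : (gaussianReal 0 1) (Set.Ici (-t)) = (gaussianReal 0 1) (Set.Iic t) := by
    conv_rhs => rw [← gaussianReal_neg_inv]
    rw [Measure.map_apply (by fun_prop) measurableSet_Iic]
    congr 1
    ext x
    simp only [Set.mem_preimage, Set.mem_Iic, Set.mem_Ici]
    constructor <;> intro hle <;> linarith
  rw [← hmap, Measure.map_apply (by fun_prop) hmeasSet, hpre, hsym, stdGaussianCDF,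
    ENNReal.ofReal_toReal (measure_ne_top _ _)]

/-- Gaussian DP guarantee of the Gaussian mechanism: if a statistic changes by at most `σ * μ`
between neighboring datasets, then adding `N(0, σ²)` noise satisfies `μ`-GDP. -/
theorem gaussian_mechanism_gdp (σ μ a b : ℝ) (hσ : 0 < σ) (hμ : 0 ≤ μ)
    (hab : |a - b| ≤ σ * μ) (S : Set ℝ) (hS : MeasurableSet S) (t : ℝ)
    (h : (gaussianReal a ⟨σ ^ 2, sq_nonneg σ⟩) S ≤ ENNReal.ofReal (stdGaussianCDF t)) :
    (gaussianReal b ⟨σ ^ 2, sq_nonneg σ⟩) S ≤ ENNReal.ofReal (stdGaussianCDF (t + μ)) := by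
  have hσ2 : (σ : ℝ) ^ 2 ≠ 0 := pow_ne_zero 2 hσ.ne'
  have hv : (⟨σ ^ 2, sq_nonneg σ⟩ : NNReal) ≠ 0 := by
    intro hcon
    exact hσ2 (congrArg NNReal.toReal hcon)
  rcases eq_or_ne b a with hba | hba
  · subst hba
    exact h.trans (ENNReal.ofReal_le_ofReal (stdGaussianCDF_mono (by linarith)))
  obtain ⟨e, he⟩ : ∃ e : ℝ, e = b - a := ⟨_, rfl⟩
  have hee : e ≠ 0 := he ▸ sub_ne_zero.mpr hba
  have habs : 0 < |e| := abs_pos.mpr hee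
  obtain ⟨s, hs, hes⟩ : ∃ s : ℝ, (s = 1 ∨ s = -1) ∧ e = |e| * s := by
    rcases lt_or_gt_of_ne hee with hneg | hpos
    · exact ⟨-1, Or.inr rfl, by rw [abs_of_neg hneg]; ring⟩
    · exact ⟨1, Or.inl rfl, by rw [abs_of_pos hpos]; ring⟩
  have hss : s * s = 1 := by rcases hs with h' | h' <;> simp [h']
  obtain ⟨t', ht'def⟩ : ∃ t' : ℝ, t' = t + |e| / σ := ⟨_, rfl⟩
  have hemu : |e| ≤ σ * μ := by rw [he]; rwa [abs_sub_comm] at hab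
  have ht' : t' ≤ t + μ := by
    have hdiv : |e| / σ ≤ μ := (div_le_iff₀ hσ).mpr (by linarith)
    rw [ht'def]; linarith
  obtain ⟨H, hHdef⟩ : ∃ H : Set ℝ, H = {x | -(σ * t) ≤ s * (x - a)} := ⟨_, rfl⟩
  have hH : MeasurableSet H := hHdef ▸ measurableSet_le measurable_const (by fun_prop)
  have hHa : (gaussianReal a ⟨σ ^ 2, sq_nonneg σ⟩) H = ENNReal.ofReal (stdGaussianCDF t) :=
    hHdef ▸ gaussian_halfline σ hσ hs a t
  have hHeq : H = {x | -(σ * t') ≤ s * (x - b)} := by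
    rw [hHdef]
    ext x
    simp only [Set.mem_setOf_eq]
    have h1 : s * (x - b) = s * (x - a) - |e| := by
      linear_combination s * he + (-s) * hes + (-|e|) * hss
    have h2 : σ * t' = σ * t + |e| := by
      rw [ht'def]; field_simp
    constructor <;> intro hle <;> nlinarith
  have hHb : (gaussianReal b ⟨σ ^ 2, sq_nonneg σ⟩) H = ENNReal.ofReal (stdGaussianCDF t') := by
    rw [hHeq]; exact gaussian_halfline σ hσ hs b t'
  -- densities
  obtain ⟨f, hfdef⟩ : ∃ f, f = gaussianPDFReal a ⟨σ ^ 2, sq_nonneg σ⟩ := ⟨_, rfl⟩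
  obtain ⟨g, hgdef⟩ : ∃ g, g = gaussianPDFReal b ⟨σ ^ 2, sq_nonneg σ⟩ := ⟨_, rfl⟩
  have hf_nonneg : ∀ x, 0 ≤ f x := fun x => hfdef ▸ gaussianPDFReal_nonneg _ _ x
  have hg_nonneg : ∀ x, 0 ≤ g x := fun x => hgdef ▸ gaussianPDFReal_nonneg _ _ x
  have hf_int : Integrable f := hfdef ▸ integrable_gaussianPDFReal _ _
  have hg_int : Integrable g := hgdef ▸ integrable_gaussianPDFReal _ _
  have hratio : ∀ x, g x = f x * Real.exp (e * (2 * x - a - b) / (2 * σ ^ 2)) := by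
    intro x
    have hc : NNReal.toReal (Subtype.mk (p := fun r : ℝ => 0 ≤ r) (σ ^ 2) (sq_nonneg σ)) = σ ^ 2 := rfl
    simp only [hfdef, hgdef, gaussianPDFReal, NNReal.coe_mk, hc]
    conv_rhs => rw [mul_assoc, ← Real.exp_add]
    congr 1
    rw [he]
    congr 1
    field_simp
    ring
  obtain ⟨θ, hθdef⟩ : ∃ θ : ℝ, θ = e * a - |e| * σ * t := ⟨_, rfl⟩
  obtain ⟨k, hkdef⟩ : ∃ k : ℝ, k = Real.exp ((2 * θ - e * (a + b)) / (2 * σ ^ 2)) := ⟨_, rfl⟩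
  have hk : 0 ≤ k := hkdef ▸ (Real.exp_pos _).le
  have hθH : ∀ x, x ∈ H ↔ θ ≤ e * x := by
    intro x
    rw [hHdef]
    simp only [Set.mem_setOf_eq]
    have h1 : e * x - θ = |e| * (s * (x - a) + σ * t) := by
      linear_combination (-1 : ℝ) * hθdef + (x - a) * hes
    constructor <;> intro hle <;> nlinarith
  have hub : ∀ x ∉ H, g x ≤ k * f x := by
    intro x hx
    have hex : e * x < θ := by
      by_contra hcon
      exact hx ((hθH x).mpr (not_lt.mp hcon))
    have hexp : Real.exp (e * (2 * x - a - b) / (2 * σ ^ 2)) ≤ k := by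
      rw [hkdef]
      apply Real.exp_le_exp.mpr
      apply div_le_div_of_nonneg_right ?_ (by positivity)
      · nlinarith
    calc g x = f x * Real.exp (e * (2 * x - a - b) / (2 * σ ^ 2)) := hratio x
      _ ≤ f x * k := mul_le_mul_of_nonneg_left hexp (hf_nonneg x)
      _ = k * f x := mul_comm _ _
  have hlb : ∀ x ∈ H, k * f x ≤ g x := by
    intro x hx
    have hex : θ ≤ e * x := (hθH x).mp hx
    have hexp : k ≤ Real.exp (e * (2 * x - a - b) / (2 * σ ^ 2)) := by
      rw [hkdef]
      apply Real.exp_le_exp.mpr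
      apply div_le_div_of_nonneg_right ?_ (by positivity)
      · nlinarith
    calc k * f x = f x * k := mul_comm _ _
      _ ≤ f x * Real.exp (e * (2 * x - a - b) / (2 * σ ^ 2)) :=
          mul_le_mul_of_nonneg_left hexp (hf_nonneg x)
      _ = g x := (hratio x).symm
  -- integral comparisons
  have hSg : (∫ x in S ∩ H, g x) + ∫ x in S \ H, g x = ∫ x in S, g x :=
    integral_inter_add_diff (s := S) hH hg_int.integrableOn
  have hHg : (∫ x in H ∩ S, g x) + ∫ x in H \ S, g x = ∫ x in H, g x :=
    integral_inter_add_diff (s := H) hS hg_int.integrableOn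
  have hSf : (∫ x in S ∩ H, f x) + ∫ x in S \ H, f x = ∫ x in S, f x :=
    integral_inter_add_diff (s := S) hH hf_int.integrableOn
  have hHf : (∫ x in H ∩ S, f x) + ∫ x in H \ S, f x = ∫ x in H, f x :=
    integral_inter_add_diff (s := H) hS hf_int.integrableOn
  have hcomm_g : ∫ x in S ∩ H, g x = ∫ x in H ∩ S, g x := by rw [Set.inter_comm]
  have hcomm_f : ∫ x in S ∩ H, f x = ∫ x in H ∩ S, f x := by rw [Set.inter_comm]
  have h1 : ∫ x in S \ H, g x ≤ k * ∫ x in S \ H, f x := by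
    rw [← integral_const_mul]
    exact setIntegral_mono_on hg_int.integrableOn ((hf_int.const_mul k).integrableOn)
      (hS.diff hH) (fun x hx => hub x hx.2)
  have h2 : k * ∫ x in H \ S, f x ≤ ∫ x in H \ S, g x := by
    rw [← integral_const_mul]
    exact setIntegral_mono_on ((hf_int.const_mul k).integrableOn) hg_int.integrableOn
      (hH.diff hS) (fun x hx => hlb x hx.1)
  -- hypothesis and half-line measure in real form
  have hint_nonneg : ∀ (T : Set ℝ), 0 ≤ ∫ x in T, f x := fun T =>
    integral_nonneg (fun x => hf_nonneg x)
  have hfS_le : ∫ x in S, f x ≤ stdGaussianCDF t := by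
    rw [gaussianReal_apply_eq_integral a hv S, ← hfdef] at h
    exact (ENNReal.ofReal_le_ofReal_iff (stdGaussianCDF_nonneg t)).mp h
  have hfH_eq : ∫ x in H, f x = stdGaussianCDF t := by
    have := hHa
    rw [gaussianReal_apply_eq_integral a hv H, ← hfdef] at this
    exact (ENNReal.ofReal_eq_ofReal_iff (hint_nonneg H) (stdGaussianCDF_nonneg t)).mp this
  have hfSH : ∫ x in S, f x ≤ ∫ x in H, f x := by rw [hfH_eq]; exact hfS_le
  have hmul : k * ∫ x in S, f x ≤ k * ∫ x in H, f x := mul_le_mul_of_nonneg_left hfSH hk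
  have e1 : k * ∫ x in S, f x = (k * ∫ x in S ∩ H, f x) + k * ∫ x in S \ H, f x := by
    rw [← hSf]; ring
  have e2 : k * ∫ x in H, f x = (k * ∫ x in H ∩ S, f x) + k * ∫ x in H \ S, f x := by
    rw [← hHf]; ring
  have e3 : k * ∫ x in S ∩ H, f x = k * ∫ x in H ∩ S, f x := by rw [hcomm_f]
  have key : ∫ x in S, g x ≤ ∫ x in H, g x := by linarith
  rw [gaussianReal_apply_eq_integral b hv S, ← hgdef]
  calc ENNReal.ofReal (∫ x in S, g x) ≤ ENNReal.ofReal (∫ x in H, g x) :=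
        ENNReal.ofReal_le_ofReal key
    _ = (gaussianReal b ⟨σ ^ 2, sq_nonneg σ⟩) H := by rw [gaussianReal_apply_eq_integral b hv H, ← hgdef]
    _ = ENNReal.ofReal (stdGaussianCDF t') := hHb
    _ ≤ ENNReal.ofReal (stdGaussianCDF (t + μ)) :=
        ENNReal.ofReal_le_ofReal (stdGaussianCDF_mono ht')
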